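/- Let L be a free ℤ-module of finite rank equipped with a symmetric bilinear form B : L × L → ℤ, and suppose there exists a vector v ∈ L with B(v,v) ∈ {1, −1, 2, −2}. Then the determinant homomorphism det : O(L,B) → ℤˣ is surjective and split: there exists a group homomorphism s : ℤˣ → O(L,B) with det ∘ s = id. -/

import Mathlib

section Aux

variable {L : Type*} [AddCommGroup L] [Module ℤ L] [Module.Free ℤ L] [Module.Finite ℤ L]

instance intModuleTower : @IsScalarTower ℤ ℤ L _
    (‹Module ℤ L›.toDistribMulAction.toMulAction.toSMul)
    (‹Module ℤ L›.toDistribMulAction.toMulAction.toSMul) :=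
  @IsScalarTower.left ℤ L _ ‹Module ℤ L›.toDistribMulAction.toMulAction

theorem det_id_add_smulRight' (f : L →ₗ[ℤ] ℤ) (v : L) :
    LinearMap.det (LinearMap.id + f.smulRight v) = 1 + f v := by
  classical
  let b := Module.Free.chooseBasis ℤ L
  rw [← LinearMap.det_toMatrix b]
  have hM : LinearMap.toMatrix b b (LinearMap.id + f.smulRight v) =
      1 + Matrix.replicateCol Unit (fun i => b.repr v i) * Matrix.replicateRow Unit (fun j => f (b j)) := by
    ext i j
    simp [LinearMap.toMatrix_apply, Matrix.mul_apply, Matrix.one_apply, Matrix.replicateCol, Matrix.replicateRow,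
      LinearMap.smulRight_apply, map_add, Finsupp.add_apply, Finsupp.single_apply, mul_comm,
      eq_comm]
  rw [hM, Matrix.det_one_add_replicateCol_mul_replicateRow]
  congr 1
  have : f v = ∑ j, b.repr v j • f (b j) := by
    conv_lhs => rw [← b.sum_repr v]
    simp only [map_sum, map_smul]
  rw [this]
  simp [dotProduct, mul_comm, smul_eq_mul]

end Aux

/-- The group of `ℤ`-linear automorphisms of `M` preserving a pairing `b : M → M → ℤ`.
For `b` a symmetric bilinear form this is the orthogonal group `O(M, b)`. -/
def isometryGroup {M : Type*} [AddCommGroup M] [Module ℤ M]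
    (b : M → M → ℤ) : Subgroup (M ≃ₗ[ℤ] M) where
  carrier := {g | ∀ x y, b (g x) (g y) = b x y}
  one_mem' := fun _ _ => rfl
  mul_mem' := by
    intro a c ha hc x y
    show b (a (c x)) (a (c y)) = b x y
    rw [ha, hc]
  inv_mem' := by
    intro g hg x y
    have h := hg (g.symm x) (g.symm y)
    simp only [LinearEquiv.apply_symm_apply] at h
    exact h.symm ▸ rfl

/-- Let `L` be a lattice (a free `ℤ`-module of finite rank with symmetric bilinear form
`B`) containing a vector `v` with `B v v ∈ {1, -1, 2, -2}`.  Then the determinant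
homomorphism `det : O(L,B) → ℤˣ` is surjective and split: there is a group homomorphism
`s : ℤˣ → O(L,B)` with `det ∘ s = id`. -/
theorem det_of_orthogonal_group_surjective_and_split
    {L : Type*} [AddCommGroup L] [Module ℤ L] [Module.Free ℤ L] [Module.Finite ℤ L]
    (B : L →ₗ[ℤ] L →ₗ[ℤ] ℤ) (hsymm : ∀ x y, B x y = B y x)
    (h : ∃ v : L, B v v = 1 ∨ B v v = -1 ∨ B v v = 2 ∨ B v v = -2) :
    Function.Surjective
      (LinearEquiv.det.comp (isometryGroup (fun x y => B x y)).subtype) ∧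
    ∃ s : ℤˣ →* ↥(isometryGroup (fun x y => B x y)),
      (LinearEquiv.det.comp (isometryGroup (fun x y => B x y)).subtype).comp s =
        MonoidHom.id ℤˣ := by
  classical
  obtain ⟨v, hv⟩ := h
  -- choose c with c * B v v = 2
  obtain ⟨c, hc⟩ : ∃ c : ℤ, c * B v v = 2 := by
    rcases hv with h1 | h1 | h1 | h1
    · exact ⟨2, by rw [h1]; ring⟩
    · exact ⟨-2, by rw [h1]; ring⟩
    · exact ⟨1, by rw [h1]; ring⟩
    · exact ⟨-1, by rw [h1]; ring⟩
  set f : L →ₗ[ℤ] ℤ := (-c) • (B v) with hf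
  set r : L →ₗ[ℤ] L := LinearMap.id + f.smulRight v with hr
  have hrapp : ∀ x, r x = x - (c * B v x) • v := by
    intro x
    simp only [hr, hf, LinearMap.add_apply, LinearMap.id_apply, LinearMap.smulRight_apply,
      LinearMap.neg_apply, LinearMap.smul_apply, smul_eq_mul, neg_mul, neg_smul,
      sub_eq_add_neg]
    exact congrArg (fun t => x + -t) (int_smul_eq_zsmul ‹Module ℤ L› _ _)
  have hBvr : ∀ x, B v (r x) = - B v x := by
    intro x
    rw [hrapp]
    simp only [map_sub, map_smul, map_zsmul, smul_eq_mul]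
    linear_combination (-(B v x)) * hc
  have hinv : ∀ x, r (r x) = x := by
    intro x
    rw [hrapp (r x), hBvr, hrapp x]
    simp [mul_neg, neg_smul]
  have hiso : ∀ x y, B (r x) (r y) = B x y := by
    intro x y
    rw [hrapp, hrapp]
    simp only [map_sub, map_smul, map_zsmul, LinearMap.sub_apply, LinearMap.smul_apply, smul_eq_mul]
    linear_combination (c * B v x * B v y) * hc - (c * B v y) * hsymm x v
  set e : L ≃ₗ[ℤ] L := LinearEquiv.ofLinear r r
    (by ext x; exact hinv x) (by ext x; exact hinv x) with he
  have heapp : ∀ x, e x = r x := fun _ => rfl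
  have hemem : e ∈ isometryGroup (fun x y => B x y) := fun x y => hiso x y
  set R : ↥(isometryGroup (fun x y => B x y)) := ⟨e, hemem⟩ with hR
  have hR2 : R * R = 1 := by
    ext x
    exact hinv x
  have hdet : LinearEquiv.det e = -1 := by
    apply Units.ext
    rw [LinearEquiv.coe_det]
    have : (e : L →ₗ[ℤ] L) = LinearMap.id + f.smulRight v := rfl
    rw [this, det_id_add_smulRight']
    simp [hf, smul_eq_mul]
    linarith [hc]
  -- the splitting
  set D := (LinearEquiv.det.comp (isometryGroup (fun x y => B x y)).subtype) with hD
  have hDR : D R = -1 := hdet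
  refine ⟨?_, ⟨{
    toFun := fun u => if u = 1 then 1 else R
    map_one' := rfl
    map_mul' := by
      intro a b
      rcases Int.units_eq_one_or a with ha | ha <;>
        rcases Int.units_eq_one_or b with hb | hb <;>
        subst ha <;> subst hb <;> simp [hR2]
  }, ?_⟩⟩
  · intro u
    rcases Int.units_eq_one_or u with hu | hu
    · exact ⟨1, by simp [hu]⟩
    · exact ⟨R, by rw [hu]; exact hDR⟩
  · ext u
    rcases Int.units_eq_one_or u with hu | hu <;> subst hu
    · simp [hDR]
    · simp [hDR]
      exact (congrArg D (if_neg (t := 1) (by decide : (-1 : ℤˣ) ≠ 1))).trans hDR
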